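/- Let V ⊂ ℤ² be a finite rectangle (V = ([a,b] × [c,d]) ∩ ℤ² for integers a ≤ b, c ≤ d) and let η : V → {1,2,3,4} be a recurrent (allowed) configuration in V. Let a_V(x) = 4 − #{y ∈ V : |y − x| = 1} for x ∈ V (so a_V adds 2 grains at each corner site, 1 grain at each other boundary site, and 0 in the interior). Then the stabilization in V of η + a_V topples every site of V exactly once and reproduces η: the minimal stabilizing vector satisfies m_V^{η + a_V}(x) = 1 for all x ∈ V, and (η + a_V) − Δ_V 1 = η. -/
import Mathlib


open MeasureTheory
open scoped ENNReal

/-- Nearest-neighbour adjacency on `ℤ^d`: `|x - y| = 1`. -/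
def adj (d : ℕ) (x y : Fin d → ℤ) : Prop := (∑ i, (x i - y i).natAbs) = 1

instance (d : ℕ) (x y : Fin d → ℤ) : Decidable (adj d x y) := by
  unfold adj; infer_instance

/-- The finite-volume toppling operator `(Δ_V m)(x)`, for `x ∈ V`. -/
def lapV (d : ℕ) (V : Finset (Fin d → ℤ)) (m : (Fin d → ℤ) → ℕ) (x : Fin d → ℤ) : ℤ :=
  2 * d * (m x : ℤ) - ∑ y ∈ V.filter (fun y => adj d x y), (m y : ℤ)

/-- `m` is a vector of toppling numbers making `η` stable in `V`:
`η(x) - (Δ_V m)(x) ≤ 2d` for all `x ∈ V`. -/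
def Stabilizes (d : ℕ) (V : Finset (Fin d → ℤ)) (η m : (Fin d → ℤ) → ℕ) : Prop :=
  ∀ x ∈ V, (η x : ℤ) - lapV d V m x ≤ 2 * d

/-- `m` is the pointwise least (on `V`) vector of toppling numbers stabilizing `η` in `V`,
i.e. `m = m_V^η` on `V`. -/
def IsMinStab (d : ℕ) (V : Finset (Fin d → ℤ)) (η m : (Fin d → ℤ) → ℕ) : Prop :=
  Stabilizes d V η m ∧ ∀ m', Stabilizes d V η m' → ∀ x ∈ V, m x ≤ m' x

/-- `η` is stabilizable: for every `x`, `sup_V m_V^η(x) < ∞`. -/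
def Stabilizable (d : ℕ) (η : (Fin d → ℤ) → ℕ) : Prop :=
  ∀ x : Fin d → ℤ, ∃ C : ℕ, ∀ (V : Finset (Fin d → ℤ)) (m : (Fin d → ℤ) → ℕ),
    IsMinStab d V η m → x ∈ V → m x ≤ C

/-- The set `𝒮` of stabilizable configurations. -/
def StabSet (d : ℕ) : Set ((Fin d → ℤ) → ℕ) := {η | Stabilizable d η}

/-- The set of height configurations (all heights at least `1`). -/
def Heights (d : ℕ) : Set ((Fin d → ℤ) → ℕ) := {η | ∀ x, 1 ≤ η x}

/-- The coordinate shift `τ_z η (x) = η (x + z)`. -/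
def shiftC (d : ℕ) (z : Fin d → ℤ) (η : (Fin d → ℤ) → ℕ) : (Fin d → ℤ) → ℕ :=
  fun x => η (x + z)

/-- `ν` is stationary (translation invariant). -/
def Stationary (d : ℕ) (ν : Measure ((Fin d → ℤ) → ℕ)) : Prop :=
  ∀ z : Fin d → ℤ, MeasurePreserving (shiftC d z) ν ν

/-- `ν` is ergodic under the shift action: shift-invariant Borel sets are trivial. -/
def ErgodicShift (d : ℕ) (ν : Measure ((Fin d → ℤ) → ℕ)) : Prop :=
  ∀ A : Set ((Fin d → ℤ) → ℕ), MeasurableSet A → (∀ z, shiftC d z ⁻¹' A = A) →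
    ν A = 0 ∨ ν A = 1


lemma adj_mem_nbrs (x y : Fin 2 → ℤ) (h : adj 2 x y) :
    y ∈ ({![x 0 + 1, x 1], ![x 0 - 1, x 1], ![x 0, x 1 + 1], ![x 0, x 1 - 1]} :
      Finset (Fin 2 → ℤ)) := by
  unfold adj at h
  rw [Fin.sum_univ_two] at h
  simp only [Finset.mem_insert, Finset.mem_singleton]
  have hy : (y 0 = x 0 + 1 ∧ y 1 = x 1) ∨ (y 0 = x 0 - 1 ∧ y 1 = x 1) ∨
      (y 0 = x 0 ∧ y 1 = x 1 + 1) ∨ (y 0 = x 0 ∧ y 1 = x 1 - 1) := by omega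
  rcases hy with ⟨h1, h2⟩ | ⟨h1, h2⟩ | ⟨h1, h2⟩ | ⟨h1, h2⟩
  · left; funext i; fin_cases i <;> simp [h1, h2]
  · right; left; funext i; fin_cases i <;> simp [h1, h2]
  · right; right; left; funext i; fin_cases i <;> simp [h1, h2]
  · right; right; right; funext i; fin_cases i <;> simp [h1, h2]

lemma deg_le_four (V : Finset (Fin 2 → ℤ)) (x : Fin 2 → ℤ) :
    (V.filter (fun y => adj 2 x y)).card ≤ 4 := by
  have hsub : V.filter (fun y => adj 2 x y) ⊆
      ({![x 0 + 1, x 1], ![x 0 - 1, x 1], ![x 0, x 1 + 1], ![x 0, x 1 - 1]} :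
        Finset (Fin 2 → ℤ)) := by
    intro y hy
    exact adj_mem_nbrs x y (Finset.mem_filter.mp hy).2
  refine (Finset.card_le_card hsub).trans ?_
  have h1 := Finset.card_insert_le (![x 0 + 1, x 1])
    ({![x 0 - 1, x 1], ![x 0, x 1 + 1], ![x 0, x 1 - 1]} : Finset (Fin 2 → ℤ))
  have h2 := Finset.card_insert_le (![x 0 - 1, x 1])
    ({![x 0, x 1 + 1], ![x 0, x 1 - 1]} : Finset (Fin 2 → ℤ))
  have h3 := Finset.card_insert_le (![x 0, x 1 + 1])
    ({![x 0, x 1 - 1]} : Finset (Fin 2 → ℤ))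
  simp only [Finset.card_singleton] at h3
  omega

/-- for a rectangle `V ⊂ ℤ²` and a recurrent configuration `η` on `V`, adding
`a_V(x) = 4 - #{neighbours of x in V}` grains at each `x ∈ V` makes every site topple exactly
once (the minimal stabilizing vector is the all-ones vector) and reproduces `η`. -/
theorem rectangle_special_addition (a b c e : ℤ) (hab : a ≤ b) (hce : c ≤ e)
    (V : Finset (Fin 2 → ℤ))
    (hV : ∀ x : Fin 2 → ℤ, x ∈ V ↔ (a ≤ x 0 ∧ x 0 ≤ b ∧ c ≤ x 1 ∧ x 1 ≤ e))
    (η : (Fin 2 → ℤ) → ℕ) (hη : ∀ x ∈ V, 1 ≤ η x ∧ η x ≤ 4)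
    (hrec : ∀ W ⊆ V, W.Nonempty → ∃ x ∈ W, (W.filter (fun y => adj 2 x y)).card < η x) :
    IsMinStab 2 V (fun x => η x + (4 - (V.filter (fun y => adj 2 x y)).card)) (fun _ => 1) ∧
    ∀ x ∈ V,
      ((η x + (4 - (V.filter (fun y => adj 2 x y)).card) : ℕ) : ℤ) -
        lapV 2 V (fun _ => 1) x = (η x : ℤ) := by
  -- lapV at the all-ones vector
  have hlap1 : ∀ x : Fin 2 → ℤ, lapV 2 V (fun _ => 1) x =
      4 - ((V.filter (fun y => adj 2 x y)).card : ℤ) := by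
    intro x
    simp [lapV]
  have hcast : ∀ x : Fin 2 → ℤ,
      ((4 - (V.filter (fun y => adj 2 x y)).card : ℕ) : ℤ) =
        4 - ((V.filter (fun y => adj 2 x y)).card : ℤ) := by
    intro x
    have := deg_le_four V x
    omega
  have heq : ∀ x ∈ V,
      ((η x + (4 - (V.filter (fun y => adj 2 x y)).card) : ℕ) : ℤ) -
        lapV 2 V (fun _ => 1) x = (η x : ℤ) := by
    intro x hx
    rw [hlap1 x]
    push_cast [hcast x]
    ring
  refine ⟨⟨?_, ?_⟩, heq⟩
  · -- Stabilizes
    intro x hx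
    rw [heq x hx]
    have := (hη x hx).2
    push_cast
    omega
  · -- minimality
    intro m' hm' x hx
    by_contra hcon
    have hx0 : m' x = 0 := Nat.lt_one_iff.mp (Nat.lt_of_not_le hcon)
    have hWsub : V.filter (fun y => m' y = 0) ⊆ V := Finset.filter_subset _ _
    have hWne : (V.filter (fun y => m' y = 0)).Nonempty :=
      ⟨x, Finset.mem_filter.mpr ⟨hx, hx0⟩⟩
    obtain ⟨z, hzW, hzcard⟩ := hrec _ hWsub hWne
    obtain ⟨hzV, hz0⟩ := Finset.mem_filter.mp hzW
    have hfilter_eq : (V.filter (fun y => adj 2 z y)).filter (fun y => m' y = 0) =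
        (V.filter (fun y => m' y = 0)).filter (fun y => adj 2 z y) := by
      ext y
      simp only [Finset.mem_filter]
      tauto
    have hsumN : (V.filter (fun y => adj 2 z y)).card ≤
        (∑ y ∈ V.filter (fun y => adj 2 z y), m' y) +
          ((V.filter (fun y => m' y = 0)).filter (fun y => adj 2 z y)).card := by
      rw [← hfilter_eq]
      have hsplit := Finset.card_filter_add_card_filter_not
        (s := V.filter (fun y => adj 2 z y)) (p := fun y => m' y = 0)
      have h1 : ((V.filter (fun y => adj 2 z y)).filter (fun y => ¬ m' y = 0)).card ≤
          ∑ y ∈ (V.filter (fun y => adj 2 z y)).filter (fun y => ¬ m' y = 0), m' y := by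
        calc ((V.filter (fun y => adj 2 z y)).filter (fun y => ¬ m' y = 0)).card
            = ∑ _y ∈ (V.filter (fun y => adj 2 z y)).filter (fun y => ¬ m' y = 0), 1 := by
              simp
          _ ≤ _ := Finset.sum_le_sum (fun y hy => by
              have := (Finset.mem_filter.mp hy).2; omega)
      have h2 : ∑ y ∈ (V.filter (fun y => adj 2 z y)).filter (fun y => ¬ m' y = 0), m' y ≤
          ∑ y ∈ V.filter (fun y => adj 2 z y), m' y :=
        Finset.sum_le_sum_of_subset (Finset.filter_subset _ _)
      omega
    have hsumZ : ((V.filter (fun y => adj 2 z y)).card : ℤ) ≤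
        (∑ y ∈ V.filter (fun y => adj 2 z y), (m' y : ℤ)) +
          (((V.filter (fun y => m' y = 0)).filter (fun y => adj 2 z y)).card : ℤ) := by
      exact_mod_cast hsumN
    have hstab := hm' z hzV
    rw [show lapV 2 V m' z =
        2 * 2 * (m' z : ℤ) - ∑ y ∈ V.filter (fun y => adj 2 z y), (m' y : ℤ) from rfl,
      hz0] at hstab
    push_cast [hcast z] at hstab
    have hηz : ((((V.filter (fun y => m' y = 0)).filter (fun y => adj 2 z y)).card : ℤ))
        < (η z : ℤ) := by exact_mod_cast hzcard
    have hFle : (((V.filter (fun y => adj 2 z y)).card : ℕ) : ℤ) ≤ 4 := by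
      exact_mod_cast deg_le_four V z
    omega
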